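/- Let M be a bounded linear operator on L² = L²(Q) that is positivity improving. Suppose there exist a scalar ρ > 0 and positive functions φ, φ* ∈ L² such that Mφ = ρφ and M*φ* = ρφ*. Then φ and φ* are the unique positive eigenfunctions of M and M* up to scale: if ζ ∈ L² is positive and Mζ = λζ for some λ ∈ ℝ, then λ = ρ and ζ = sφ Q-a.e. for some s > 0; and likewise if ζ ∈ L² is positive and M*ζ = λζ for some λ ∈ ℝ, then λ = ρ and ζ = sφ* Q-a.e. for some s > 0. (Proposition A.1 of the paper.) -/

import Mathlib

open MeasureTheory

section Aux

variable {X : Type*} [MeasurableSpace X] {μ : Measure X}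

private lemma inner_eq_integral (f g : Lp ℝ 2 μ) :
    (inner ℝ f g : ℝ) = ∫ x, f x * g x ∂μ := by
  rw [L2.inner_def]; simp [RCLike.inner_apply, mul_comm]

private lemma integrable_mul (f g : Lp ℝ 2 μ) :
    Integrable (fun x => f x * g x) μ := by
  simpa [RCLike.inner_apply] using L2.integrable_inner (𝕜 := ℝ) g f

/-- positivity of ⟪f, g⟫ for nonneg nonzero f and positive g. -/
private lemma inner_pos {f g : Lp ℝ 2 μ} (hf : ∀ᵐ x ∂μ, 0 ≤ f x) (hf0 : f ≠ 0)
    (hg : ∀ᵐ x ∂μ, 0 < g x) : 0 < (inner ℝ f g : ℝ) := by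
  rw [inner_eq_integral]
  have hnn : 0 ≤ᵐ[μ] fun x => f x * g x := by
    filter_upwards [hf, hg] with x h1 h2
    exact mul_nonneg h1 h2.le
  have hint := integrable_mul f g
  rcases lt_or_eq_of_le (integral_nonneg_of_ae hnn) with h | h
  · exact h
  · exfalso
    have hz : (fun x => f x * g x) =ᵐ[μ] 0 :=
      (integral_eq_zero_iff_of_nonneg_ae hnn hint).mp h.symm
    apply hf0
    rw [Lp.eq_zero_iff_ae_eq_zero]
    filter_upwards [hz, hg] with x h1 h2
    simpa using (mul_eq_zero.mp h1).resolve_right (ne_of_gt h2)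

private lemma ne_zero_of_ae_pos [IsProbabilityMeasure μ] {f : Lp ℝ 2 μ}
    (hf : ∀ᵐ x ∂μ, 0 < f x) : f ≠ 0 := by
  intro h
  rw [Lp.eq_zero_iff_ae_eq_zero] at h
  have : ∀ᵐ x ∂μ, False := by
    filter_upwards [hf, h] with x h1 h2
    rw [Pi.zero_apply] at h2
    exact absurd h1 (by rw [h2]; exact lt_irrefl 0)
  have hne : μ ≠ 0 := IsProbabilityMeasure.ne_zero μ
  exact (ae_neBot.mpr hne).ne (Filter.eventually_false_iff_eq_bot.mp this)

/-- The adjoint of a positivity improving operator is positivity improving. -/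
private lemma adjoint_pi [IsProbabilityMeasure μ] (M : Lp ℝ 2 μ →L[ℝ] Lp ℝ 2 μ)
    (hM : ∀ ψ : Lp ℝ 2 μ, (∀ᵐ x ∂μ, 0 ≤ ψ x) → ψ ≠ 0 → ∀ᵐ x ∂μ, 0 < (M ψ) x)
    (ψ : Lp ℝ 2 μ) (hψ : ∀ᵐ x ∂μ, 0 ≤ ψ x) (hψ0 : ψ ≠ 0) :
    ∀ᵐ x ∂μ, 0 < (ContinuousLinearMap.adjoint M ψ) x := by
  set g : Lp ℝ 2 μ := ContinuousLinearMap.adjoint M ψ with hg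
  have hgm := (Lp.aestronglyMeasurable g)
  set g' := hgm.mk g with hg'
  have hgg' : ⇑g =ᵐ[μ] g' := hgm.ae_eq_mk
  have hA : MeasurableSet {x | g' x ≤ 0} :=
    measurableSet_le (hgm.stronglyMeasurable_mk.measurable) measurable_const
  have hA0 : μ {x | g' x ≤ 0} = 0 := by
    by_contra hA0
    set χ : Lp ℝ 2 μ := indicatorConstLp 2 hA (measure_ne_top μ _) (1 : ℝ) with hχ
    have hχcoe : ⇑χ =ᵐ[μ] Set.indicator {x | g' x ≤ 0} (fun _ => (1:ℝ)) :=
      indicatorConstLp_coeFn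
    have hχnn : ∀ᵐ x ∂μ, 0 ≤ χ x := by
      filter_upwards [hχcoe] with x h
      rw [h]; exact Set.indicator_nonneg (fun _ _ => zero_le_one) x
    have hχ0 : χ ≠ 0 := by
      intro h
      rw [Lp.eq_zero_iff_ae_eq_zero] at h
      apply hA0
      have : ∀ᵐ x ∂μ, Set.indicator {x | g' x ≤ 0} (fun _ => (1:ℝ)) x = 0 := by
        filter_upwards [hχcoe, h] with x h1 h2
        rw [← h1]; exact h2
      apply measure_eq_zero_iff_ae_notMem.mpr
      filter_upwards [this] with x hx hxA
      rw [Set.indicator_of_mem (s := {x | g' x ≤ 0}) hxA] at hx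
      exact one_ne_zero hx
    have hpos : 0 < (inner ℝ ψ (M χ) : ℝ) := inner_pos hψ hψ0 (hM χ hχnn hχ0)
    have heq : (inner ℝ ψ (M χ) : ℝ) = inner ℝ g χ := by
      rw [hg]
      exact (ContinuousLinearMap.adjoint_inner_left M χ ψ).symm
    have hle : (inner ℝ g χ : ℝ) ≤ 0 := by
      rw [inner_eq_integral]
      have : (fun x => g x * χ x) =ᵐ[μ]
          Set.indicator {x | g' x ≤ 0} g' := by
        filter_upwards [hgg', hχcoe] with x h1 h2
        rw [h1, h2]
        by_cases hx : x ∈ {x | g' x ≤ 0}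
        · rw [Set.indicator_of_mem hx, Set.indicator_of_mem hx]; ring
        · rw [Set.indicator_of_notMem hx, Set.indicator_of_notMem hx]; ring
      rw [integral_congr_ae this]
      apply integral_nonpos_of_ae
      filter_upwards with x
      simp only [Pi.zero_apply]
      by_cases hx : x ∈ {x | g' x ≤ 0}
      · rw [Set.indicator_of_mem hx]; exact hx
      · rw [Set.indicator_of_notMem hx]
    rw [heq] at hpos
    exact absurd hle (not_le.mpr hpos)
  filter_upwards [hgg', measure_eq_zero_iff_ae_notMem.mp hA0] with x h1 h2
  rw [h1]
  exact not_le.mp h2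

/-- The main uniqueness lemma for positivity improving operators. -/
private lemma key [IsProbabilityMeasure μ] (N : Lp ℝ 2 μ →L[ℝ] Lp ℝ 2 μ)
    (hN : ∀ ψ : Lp ℝ 2 μ, (∀ᵐ x ∂μ, 0 ≤ ψ x) → ψ ≠ 0 → ∀ᵐ x ∂μ, 0 < (N ψ) x)
    (ρ : ℝ) (hρ : 0 < ρ) (η ηstar : Lp ℝ 2 μ)
    (hη : ∀ᵐ x ∂μ, 0 < η x) (hηstar : ∀ᵐ x ∂μ, 0 < ηstar x)
    (heig : N η = ρ • η)
    (heigstar : ContinuousLinearMap.adjoint N ηstar = ρ • ηstar)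
    (ζ : Lp ℝ 2 μ) (lam : ℝ) (hζ : ∀ᵐ x ∂μ, 0 < ζ x) (hζeig : N ζ = lam • ζ) :
    lam = ρ ∧ ∃ s : ℝ, 0 < s ∧ ζ = s • η := by
  have hζ0 : ζ ≠ 0 := ne_zero_of_ae_pos hζ
  have hη0 : η ≠ 0 := ne_zero_of_ae_pos hη
  have hJ : 0 < (inner ℝ ζ ηstar : ℝ) :=
    inner_pos (hζ.mono fun x h => h.le) hζ0 hηstar
  have hK : 0 < (inner ℝ η ηstar : ℝ) :=
    inner_pos (hη.mono fun x h => h.le) hη0 hηstar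
  -- lam = ρ
  have hlam : lam = ρ := by
    have h1 : (inner ℝ (N ζ) ηstar : ℝ) = lam * inner ℝ ζ ηstar := by
      rw [hζeig, real_inner_smul_left]
    have h2 : (inner ℝ (N ζ) ηstar : ℝ) = ρ * inner ℝ ζ ηstar := by
      rw [← ContinuousLinearMap.adjoint_inner_right, heigstar, real_inner_smul_right]
    have := h1.symm.trans h2
    exact mul_right_cancel₀ (ne_of_gt hJ) this
  refine ⟨hlam, ?_⟩
  rw [hlam] at hζeig
  -- uniqueness
  set t : ℝ := (inner ℝ ζ ηstar : ℝ) / (inner ℝ η ηstar : ℝ) with ht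
  have htpos : 0 < t := div_pos hJ hK
  set f : Lp ℝ 2 μ := ζ - t • η with hf
  have hfinner : (inner ℝ f ηstar : ℝ) = 0 := by
    rw [hf, inner_sub_left, real_inner_smul_left, ht]
    field_simp
    ring
  have hNf : N f = ρ • f := by
    rw [hf, map_sub, _root_.map_smul, hζeig, heig, smul_comm, smul_sub]
  by_cases hf0 : f = 0
  · refine ⟨t, htpos, ?_⟩
    have : ζ - t • η = 0 := by rw [← hf, hf0]
    exact sub_eq_zero.mp this
  exfalso
  set fp := Lp.posPart f with hfp
  set fn := Lp.negPart f with hfn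
  have hfpcoe : ⇑fp =ᵐ[μ] fun x => max (f x) 0 := Lp.coeFn_posPart f
  have hfncoe : ∀ᵐ x ∂μ, fn x = max (-f x) 0 := Lp.coeFn_negPart_eq_max f
  have hfpnn : ∀ᵐ x ∂μ, 0 ≤ fp x := by
    filter_upwards [hfpcoe] with x h; rw [h]; exact le_max_right _ _
  have hfnnn : ∀ᵐ x ∂μ, 0 ≤ fn x := by
    filter_upwards [hfncoe] with x h; rw [h]; exact le_max_right _ _
  -- fp ≠ 0
  have hfp0 : fp ≠ 0 := by
    intro h
    rw [Lp.eq_zero_iff_ae_eq_zero] at h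
    have hfle : ∀ᵐ x ∂μ, f x ≤ 0 := by
      filter_upwards [hfpcoe, h] with x h1 h2
      rw [Pi.zero_apply] at h2
      exact max_eq_right_iff.mp (h1.symm.trans h2)
    have hnegpos : 0 < (inner ℝ (-f) ηstar : ℝ) := by
      apply inner_pos _ (neg_ne_zero.mpr hf0) hηstar
      filter_upwards [hfle, Lp.coeFn_neg f] with x h1 h2
      rw [h2]; simpa using h1
    rw [inner_neg_left, hfinner, neg_zero] at hnegpos
    exact lt_irrefl 0 hnegpos
  have hfn0 : fn ≠ 0 := by
    intro h
    rw [Lp.eq_zero_iff_ae_eq_zero] at h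
    have hfge : ∀ᵐ x ∂μ, 0 ≤ f x := by
      filter_upwards [hfncoe, h] with x h1 h2
      rw [Pi.zero_apply] at h2
      have hm : max (-f x) 0 = 0 := h1.symm.trans h2
      have : -f x ≤ 0 := by
        by_contra hc
        push_neg at hc
        rw [max_eq_left hc.le] at hm
        linarith
      linarith
    have := inner_pos hfge hf0 hηstar
    rw [hfinner] at this
    exact lt_irrefl 0 this
  -- set g = fp + fn
  set g : Lp ℝ 2 μ := fp + fn with hgdef
  have hgcoe : ∀ᵐ x ∂μ, g x = |f x| := by
    filter_upwards [Lp.coeFn_add fp fn, hfpcoe, hfncoe] with x h1 h2 h3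
    rw [hgdef]
    rw [h1, Pi.add_apply, h2, h3]
    rcases le_total (f x) 0 with h | h
    · rw [max_eq_right h, max_eq_left (by linarith), abs_of_nonpos h]; ring
    · rw [max_eq_left h, max_eq_right (by linarith), abs_of_nonneg h]; ring
  have hsub : fp - fn = f := by
    apply Lp.ext
    filter_upwards [Lp.coeFn_sub fp fn, hfpcoe, hfncoe] with x h1 h2 h3
    rw [h1, Pi.sub_apply, h2, h3]
    rcases le_total (f x) 0 with h | h
    · rw [max_eq_right h, max_eq_left (by linarith)]; ring
    · rw [max_eq_left h, max_eq_right (by linarith)]; ring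
  have hNfp := hN fp hfpnn hfp0
  have hNfn := hN fn hfnnn hfn0
  -- key strict inequality a.e.
  have hstrict : ∀ᵐ x ∂μ, ρ * g x < (N g) x := by
    have hNg : ⇑(N g) =ᵐ[μ] fun x => (N fp) x + (N fn) x := by
      rw [hgdef, map_add]
      exact Lp.coeFn_add _ _
    have hNfdiff : ⇑(N f) =ᵐ[μ] fun x => (N fp) x - (N fn) x := by
      rw [← hsub, map_sub]
      exact Lp.coeFn_sub _ _
    have hNfρ : ⇑(N f) =ᵐ[μ] fun x => ρ * f x := by
      rw [hNf]
      filter_upwards [Lp.coeFn_smul ρ f] with x h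
      rw [h]; rfl
    filter_upwards [hNg, hNfdiff, hNfρ, hgcoe, hNfp, hNfn] with x h1 h2 h3 h4 h5 h6
    rw [h1, h4]
    have : ρ * |f x| = |(N f) x| := by
      rw [h3, abs_mul, abs_of_pos hρ]
    rw [this, h2]
    exact abs_sub_lt_iff.mpr ⟨by linarith, by linarith⟩
  -- contradiction via inner product with ηstar
  set D : Lp ℝ 2 μ := N g - ρ • g with hD
  have hDinner : (inner ℝ D ηstar : ℝ) = 0 := by
    rw [hD, inner_sub_left, real_inner_smul_left,
      ← ContinuousLinearMap.adjoint_inner_right, heigstar, real_inner_smul_right]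
    ring
  have hDpos : 0 < (inner ℝ D ηstar : ℝ) := by
    have hDcoe : ∀ᵐ x ∂μ, D x = (N g) x - ρ * g x := by
      rw [hD]
      filter_upwards [Lp.coeFn_sub (N g) (ρ • g), Lp.coeFn_smul ρ g] with x h1 h2
      rw [h1, Pi.sub_apply, h2]; rfl
    have hDnn : ∀ᵐ x ∂μ, 0 ≤ D x := by
      filter_upwards [hDcoe, hstrict] with x h1 h2
      rw [h1]; linarith
    have hD0 : D ≠ 0 := by
      intro h
      rw [Lp.eq_zero_iff_ae_eq_zero] at h
      have : ∀ᵐ x ∂μ, False := by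
        filter_upwards [hDcoe, hstrict, h] with x h1 h2 h3
        rw [Pi.zero_apply] at h3
        rw [h3] at h1  -- 0 = Ng x - ρ g x
        linarith [h1]
      exact (ae_neBot.mpr (IsProbabilityMeasure.ne_zero μ)).ne
        (Filter.eventually_false_iff_eq_bot.mp this)
    exact inner_pos hDnn hD0 hηstar
  rw [hDinner] at hDpos
  exact lt_irrefl 0 hDpos

end Aux

/-- **Proposition A.1.** Let `M` be a bounded linear operator on `L²(Q)` that is positivity
improving.  Suppose there exist a scalar `ρ > 0` and positive functions `φ, φ* ∈ L²` with
`Mφ = ρφ` and `M*φ* = ρφ*`.  Then `φ` and `φ*` are the unique positive eigenfunctions of `M`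
and `M*` up to (positive) scale. -/
theorem stmt_0
    {X : Type*} [MeasurableSpace X] (μ : Measure X) [IsProbabilityMeasure μ]
    (M : Lp ℝ 2 μ →L[ℝ] Lp ℝ 2 μ)
    (hM : ∀ ψ : Lp ℝ 2 μ, (∀ᵐ x ∂μ, 0 ≤ ψ x) → ψ ≠ 0 → ∀ᵐ x ∂μ, 0 < (M ψ) x)
    (ρ : ℝ) (hρ : 0 < ρ)
    (φ φstar : Lp ℝ 2 μ)
    (hφ : ∀ᵐ x ∂μ, 0 < φ x) (hφstar : ∀ᵐ x ∂μ, 0 < φstar x)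
    (heig : M φ = ρ • φ)
    (heigstar : ContinuousLinearMap.adjoint M φstar = ρ • φstar) :
    (∀ ζ : Lp ℝ 2 μ, ∀ lam : ℝ, (∀ᵐ x ∂μ, 0 < ζ x) → M ζ = lam • ζ →
      lam = ρ ∧ ∃ s : ℝ, 0 < s ∧ ζ = s • φ) ∧
    (∀ ζ : Lp ℝ 2 μ, ∀ lam : ℝ, (∀ᵐ x ∂μ, 0 < ζ x) →
      ContinuousLinearMap.adjoint M ζ = lam • ζ →
      lam = ρ ∧ ∃ s : ℝ, 0 < s ∧ ζ = s • φstar) := by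
  constructor
  · intro ζ lam hζ hζeig
    exact key M hM ρ hρ φ φstar hφ hφstar heig heigstar ζ lam hζ hζeig
  · intro ζ lam hζ hζeig
    have hMadj := adjoint_pi M hM
    have hMdd : ContinuousLinearMap.adjoint (ContinuousLinearMap.adjoint M) = M :=
      ContinuousLinearMap.adjoint_adjoint M
    refine key (ContinuousLinearMap.adjoint M) hMadj ρ hρ φstar φ hφstar hφ heigstar
      (by rw [hMdd]; exact heig) ζ lam hζ hζeig
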